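/- For nonnegative integers A, B, C with C <= B, the sum over i from 0 to C of C^{i+A}_i * C^{B-i}_{C-i} equals C^{A+B+1}_C, where C^m_n denotes the Catalan triangle number ((m-n+1)/(m+1)) * binomial(m+n, n). -/

import Mathlib

def catT (m n : ℕ) : ℚ := (((m : ℚ) - n + 1) / ((m : ℚ) + 1)) * Nat.choose (m + n) n

lemma catT_zero (m : ℕ) : catT m 0 = 1 := by
  have h : (m : ℚ) + 1 ≠ 0 := by positivity
  simp [catT]
  exact h

lemma catT_self_succ (m : ℕ) : catT m (m + 1) = 0 := by
  have : ((m : ℚ) - (m + 1 : ℕ) + 1) = 0 := by push_cast; ring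
  simp [catT, this]

lemma catT_succ_succ (m n : ℕ) : catT (m+1) (n+1) = catT (m+1) n + catT m (n+1) := by
  unfold catT
  have e1 : m + 1 + (n + 1) = (m + n + 1) + 1 := by omega
  have e2 : m + 1 + n = m + n + 1 := by omega
  have e3 : m + (n + 1) = m + n + 1 := by omega
  rw [e1, e2, e3, Nat.choose_succ_succ]
  have key : ((m+n+1).choose (n+1) : ℚ) * ((n:ℚ)+1) = ((m+n+1).choose n : ℚ) * ((m:ℚ)+1) := by
    have h := Nat.choose_succ_right_eq (m+n+1) n
    have h2 : m + n + 1 - n = m + 1 := by omega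
    rw [h2] at h
    exact_mod_cast congrArg (Nat.cast (R := ℚ)) h
  have h1 : (m : ℚ) + 1 + 1 ≠ 0 := by positivity
  have h2 : (m : ℚ) + 1 ≠ 0 := by positivity
  push_cast
  generalize ((m+n+1).choose n : ℚ) = X at key ⊢
  generalize ((m+n+1).choose (n+1) : ℚ) = Y at key ⊢
  field_simp
  linear_combination key

lemma catT_aux (B : ℕ) : ∀ C A : ℕ, C ≤ B + 1 →
    ∑ i ∈ Finset.range (C + 1), catT (i + A) i * catT (B - i) (C - i)
      = catT (A + B + 1) C := by
  induction B with
  | zero =>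
    intro C A hC
    interval_cases C
    · simp [Finset.sum_range_succ, catT_zero]
    · have h01 : catT 0 1 = 0 := by
        have := catT_self_succ 0
        simpa using this
      rw [Finset.sum_range_succ, Finset.sum_range_one]
      simp only [Nat.zero_sub, Nat.sub_self, zero_add]
      rw [h01, catT_zero, catT_zero]
      have e : 1 + A = A + 0 + 1 := by omega
      rw [e]; ring
  | succ B ih =>
    intro C A hC
    induction C with
    | zero => simp [catT_zero]
    | succ C ihC =>
      by_cases hCB : C ≤ B
      · rw [Finset.sum_range_succ]
        have hsplit : ∀ i ∈ Finset.range (C + 1),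
            catT (i + A) i * catT (B + 1 - i) (C + 1 - i)
              = catT (i + A) i * catT (B + 1 - i) (C - i)
                + catT (i + A) i * catT (B - i) (C + 1 - i) := by
          intro i hi
          simp only [Finset.mem_range] at hi
          have h1 : B + 1 - i = (B - i) + 1 := by omega
          have h2 : C + 1 - i = (C - i) + 1 := by omega
          rw [h1, h2, catT_succ_succ, mul_add]
        rw [Finset.sum_congr rfl hsplit, Finset.sum_add_distrib]
        rw [ihC (by omega)]
        have hlast : catT (C + 1 + A) (C + 1) * catT (B + 1 - (C + 1)) (C + 1 - (C + 1))
            = catT (C + 1 + A) (C + 1) * catT (B - (C + 1)) (C + 1 - (C + 1)) := by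
          have e : C + 1 - (C + 1) = 0 := by omega
          rw [e, catT_zero, catT_zero]
        rw [hlast, add_assoc, ← Finset.sum_range_succ
          (fun i => catT (i + A) i * catT (B - i) (C + 1 - i)) (C + 1)]
        rw [ih (C + 1) A (by omega)]
        exact (catT_succ_succ (A + B + 1) C).symm
      · have hC' : C = B + 1 := by omega
        subst hC'
        rw [Finset.sum_range_succ]
        rw [Finset.sum_eq_zero]
        · have e1 : B + 1 - (B + 1 + 1) = 0 := by omega
          have e2 : B + 1 + 1 - (B + 1 + 1) = 0 := by omega
          rw [e1, e2, catT_zero, mul_one]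
          have e3 : B + 1 + 1 + A = A + (B + 1) + 1 := by omega
          rw [e3, zero_add]
        · intro i hi
          simp only [Finset.mem_range] at hi
          have h1 : B + 1 + 1 - i = (B + 1 - i) + 1 := by omega
          rw [h1, catT_self_succ, mul_zero]

theorem catalan_triangle_convolution (A B C : ℕ) (hCB : C ≤ B) :
    ∑ i ∈ Finset.range (C + 1), catT (i + A) i * catT (B - i) (C - i)
      = catT (A + B + 1) C := by
  exact catT_aux B C A (by omega)
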